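/- Define κ multiplicatively on nonzero ideals of 𝒪_K by κ(𝔭^k) = N(𝔭)^{k/2} + N(𝔭)^{k/2−1} for even k ≥ 2 and κ(𝔭^k) = 2·N(𝔭)^{(k−1)/2} for odd k, with κ(𝒪_K) = 1. Then for every nonzero ideal 𝔞, κ(𝔞) ≤ ι(𝔞)/√(N(𝔞)) as real numbers, where ι(𝔞) = N(𝔞)·∏_{𝔭|𝔞}(1 + 1/N(𝔭)). -/

import Mathlib

set_option synthInstance.maxHeartbeats 400000
set_option maxHeartbeats 800000

open scoped Classical

open NumberField

/-- The index function `ι(𝔞) = N(𝔞)·∏_{𝔭 ∣ 𝔞}(1 + 1/N(𝔭))` (real-valued). -/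
noncomputable def iotaIdxR (K : Type) [Field K] [NumberField K] (a : Ideal (𝓞 K)) : ℝ :=
  (Ideal.absNorm a : ℝ) *
    ∏ p ∈ (UniqueFactorizationMonoid.factors a).toFinset, (1 + 1 / (Ideal.absNorm p : ℝ))

open UniqueFactorizationMonoid in
private lemma factors_pp_toFinset (K : Type) [Field K] [NumberField K]
    (p : Ideal (𝓞 K)) (hp : Prime p) (k : ℕ) (hk : 1 ≤ k) :
    (factors (p ^ k)).toFinset = {p} := by
  rw [factors_eq_normalizedFactors, hp.irreducible.normalizedFactors_pow, normalize_eq p]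
  simp [Multiset.toFinset_replicate, Nat.one_le_iff_ne_zero.mp hk]

open UniqueFactorizationMonoid in
private lemma iota_mul (K : Type) [Field K] [NumberField K] (a b : Ideal (𝓞 K))
    (ha : a ≠ 0) (hb : b ≠ 0) (hab : a ⊔ b = ⊤) :
    iotaIdxR K (a * b) = iotaIdxR K a * iotaIdxR K b := by
  have hdisj : Disjoint (factors a).toFinset (factors b).toFinset := by
    rw [Finset.disjoint_left]
    intro q hqa hqb
    simp only [Multiset.mem_toFinset] at hqa hqb
    have h1 : q ∣ a := dvd_of_mem_factors hqa
    have h2 : q ∣ b := dvd_of_mem_factors hqb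
    exact (prime_of_factor q hqa).not_unit (Ideal.isUnit_iff.mpr (top_le_iff.mp
      (hab ▸ sup_le_sup (Ideal.le_of_dvd h1) (Ideal.le_of_dvd h2) |>.trans_eq (by simp))))
  have hfac : (factors (a * b)).toFinset = (factors a).toFinset ∪ (factors b).toFinset := by
    rw [factors_eq_normalizedFactors, factors_eq_normalizedFactors, factors_eq_normalizedFactors,
      normalizedFactors_mul ha hb, Multiset.toFinset_add]
  rw [iotaIdxR, iotaIdxR, iotaIdxR, hfac, Finset.prod_union hdisj,
    _root_.map_mul Ideal.absNorm a b, Nat.cast_mul]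
  ring

/-- If `κ` is the multiplicative function on nonzero ideals of `𝒪_K` with
`κ(𝔭^k) = N(𝔭)^{k/2} + N(𝔭)^{k/2−1}` for even `k` and `κ(𝔭^k) = 2·N(𝔭)^{(k−1)/2}` for
odd `k`, and `κ(𝒪_K) = 1`, then `κ(𝔞) ≤ ι(𝔞)/√(N 𝔞)` for every nonzero ideal `𝔞`. -/
theorem kappa_le_iota_div_sqrt_norm (K : Type) [Field K] [NumberField K]
    (κ : Ideal (𝓞 K) → ℝ)
    (hone : κ 1 = 1)
    (hmul : ∀ a b : Ideal (𝓞 K), a ⊔ b = ⊤ → κ (a * b) = κ a * κ b)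
    (hpp : ∀ p : Ideal (𝓞 K), Prime p → ∀ k : ℕ, 1 ≤ k →
      κ (p ^ k) =
        if Even k then
          (Ideal.absNorm p : ℝ) ^ (k / 2) + (Ideal.absNorm p : ℝ) ^ (k / 2 - 1)
        else 2 * (Ideal.absNorm p : ℝ) ^ ((k - 1) / 2)) :
    ∀ a : Ideal (𝓞 K), a ≠ ⊥ →
      κ a ≤ iotaIdxR K a / Real.sqrt (Ideal.absNorm a) := by
  have hone' : ∀ x : Ideal (𝓞 K), IsUnit x →
      0 ≤ κ x ∧ κ x ≤ iotaIdxR K x / Real.sqrt (Ideal.absNorm x) := by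
    intro x hx
    have hx1 : x = 1 := by rw [Ideal.isUnit_iff] at hx; rw [hx, ← Ideal.one_eq_top]
    subst hx1
    have hfac : (UniqueFactorizationMonoid.factors (1 : Ideal (𝓞 K))) = 0 :=
      UniqueFactorizationMonoid.factors_one
    rw [hone, iotaIdxR, hfac]
    norm_num
  have hP : ∀ a : Ideal (𝓞 K), a ≠ 0 →
      0 ≤ κ a ∧ κ a ≤ iotaIdxR K a / Real.sqrt (Ideal.absNorm a) := by
    intro a
    induction a using UniqueFactorizationMonoid.induction_on_coprime with
    | h0 => intro h; exact absurd rfl h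
    | h1 hx => intro _; exact hone' _ hx
    | hpr i hp =>
      rename_i p
      intro _
      rcases Nat.eq_zero_or_pos i with rfl | hi
      · rw [pow_zero]; exact hone' _ isUnit_one
      · -- prime power, i ≥ 1
        set q : ℝ := (Ideal.absNorm p : ℝ) with hq_def
        have hp0 : p ≠ ⊥ := hp.ne_zero
        have hqnat : Ideal.absNorm p ≠ 0 := fun h => hp0 (Ideal.absNorm_eq_zero_iff.mp h)
        have hq : 0 < q := by
          rw [hq_def]; exact_mod_cast Nat.pos_of_ne_zero hqnat
        set s : ℝ := Real.sqrt q with hs_def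
        have hs0 : 0 ≤ s := Real.sqrt_nonneg q
        have hs2 : s ^ 2 = q := Real.sq_sqrt hq.le
        have hnorm : ((Ideal.absNorm (p ^ i) : ℕ) : ℝ) = q ^ i := by
          rw [map_pow Ideal.absNorm, Nat.cast_pow]
        have hsqrt : Real.sqrt (Ideal.absNorm (p ^ i)) = s ^ i := by
          rw [hnorm, ← hs2, ← pow_mul, mul_comm 2 i, pow_mul, Real.sqrt_sq (by positivity)]
        have hiota : iotaIdxR K (p ^ i) = q ^ i * (1 + 1 / q) := by
          rw [iotaIdxR, factors_pp_toFinset K p hp i hi, Finset.prod_singleton, hnorm]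
        have hκ := hpp p hp i hi
        rw [hκ]
        simp only [← hq_def]
        constructor
        · split <;> positivity
        rw [hiota, hsqrt]
        rcases Nat.even_or_odd i with he | ho
        · obtain ⟨m, rfl⟩ := he
          have hm : 1 ≤ m := by omega
          obtain ⟨n, rfl⟩ : ∃ n, m = n + 1 := ⟨m - 1, by omega⟩
          rw [if_pos (by exact ⟨n + 1, by ring⟩)]
          have h1 : (n + 1 + (n + 1)) / 2 = n + 1 := by omega
          have h2 : (n + 1 + (n + 1)) / 2 - 1 = n := by omega
          rw [h2, h1]
          have hspow : s ^ (n + 1 + (n + 1)) = q ^ (n + 1) := by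
            rw [← hs2, ← pow_mul]; ring
          have heq : q ^ (n + 1 + (n + 1)) * (1 + 1 / q) / q ^ (n + 1)
              = q ^ (n + 1) + q ^ n := by
            field_simp
            ring
          rw [hspow, heq]
        · obtain ⟨n, rfl⟩ := ho
          rw [if_neg (by simp [Nat.even_add_one, parity_simps])]
          have h1 : (2 * n + 1 - 1) / 2 = n := by omega
          rw [h1]
          have hspow : s ^ (2 * n + 1) = q ^ n * s := by
            rw [pow_succ, ← hs2, ← pow_mul]
          rw [hspow, le_div_iff₀ (by positivity)]
          have hexp : q ^ (2 * n + 1) * (1 + 1 / q) = q ^ n * q ^ n * s ^ 2 + q ^ n * q ^ n := by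
            have hsne : s ≠ 0 := (Real.sqrt_pos.mpr hq).ne'
            rw [← hs2]; field_simp; ring
          rw [hexp]
          nlinarith [mul_nonneg (mul_nonneg (pow_nonneg hq.le n) (pow_nonneg hq.le n))
            (sq_nonneg (s - 1))]
    | hcp hxy hx hy =>
      rename_i x y
      intro hne
      have hx0 : x ≠ 0 := left_ne_zero_of_mul hne
      have hy0 : y ≠ 0 := right_ne_zero_of_mul hne
      have hsup : x ⊔ y = ⊤ := by
        have hd1 : x ⊔ y ∣ x := Ideal.dvd_iff_le.mpr le_sup_left
        have hd2 : x ⊔ y ∣ y := Ideal.dvd_iff_le.mpr le_sup_right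
        exact Ideal.isUnit_iff.mp (hxy hd1 hd2)
      obtain ⟨hx1, hx2⟩ := hx hx0
      obtain ⟨hy1, hy2⟩ := hy hy0
      have hA : 0 ≤ iotaIdxR K x / Real.sqrt (Ideal.absNorm x) := le_trans hx1 hx2
      constructor
      · rw [hmul x y hsup]; exact mul_nonneg hx1 hy1
      · rw [hmul x y hsup, iota_mul K x y hx0 hy0 hsup, _root_.map_mul Ideal.absNorm,
          Nat.cast_mul, Real.sqrt_mul (by positivity) _]
        calc κ x * κ y ≤ (iotaIdxR K x / Real.sqrt (Ideal.absNorm x)) *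
              (iotaIdxR K y / Real.sqrt (Ideal.absNorm y)) :=
            mul_le_mul hx2 hy2 hy1 hA
          _ = _ := div_mul_div_comm _ _ _ _
  intro a ha
  exact (hP a (by rwa [Ideal.zero_eq_bot])).2
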